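/- Let R be a commutative noetherian ring, S a left noetherian ring which is an R-algebra, I and J ideals of R, and E an injective S-module. Then Γ_{I,J}(E) is an injective S-module. -/

import Mathlib

/-- Annihilator in `R` of an `S`-submodule, `R` acting through `algebraMap R S`. -/
def annRS (R : Type*) {S M : Type*} [CommRing R] [Ring S] [Algebra R S]
    [AddCommGroup M] [Module S M] (N : Submodule S M) : Ideal R where
  carrier := {r : R | ∀ x ∈ N, algebraMap R S r • x = 0}
  zero_mem' := by intro x _; simp
  add_mem' := by
    intro a b ha hb x hx
    rw [map_add, add_smul, ha x hx, hb x hx, add_zero]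
  smul_mem' := by
    intro c a ha x hx
    rw [smul_eq_mul, map_mul, mul_smul, ha x hx, smul_zero]

/-- `Γ_{I,J}` of a module. -/
def gammaIJ (R S : Type*) [CommRing R] [Ring S] [Algebra R S] (I J : Ideal R)
    (M : Type*) [AddCommGroup M] [Module S M] : Submodule S M :=
  sSup {N : Submodule S M | N.FG ∧ ∃ n, 1 ≤ n ∧ I ^ n ≤ annRS R N ⊔ J}

/-! ## A "local Baer" criterion for injectivity

`Module.Injective S Q` only quantifies over test modules in the universe of `Q`, so the
usual Baer criterion hypothesis (extension of maps from ideals of `S`) cannot be derived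
from `Module.Injective S E` when the universes differ.  Fortunately, in Baer's
Zorn-lemma argument, the only ideal maps one ever needs to extend are of the special form
`s ↦ φ (s • y)` for a partial linear map `φ` defined on a submodule of a test module `Y`.
We formalize this "local Baer" condition and redo the adjoin step of mathlib's proof. -/

noncomputable section LocalBaerSection

universe u v

namespace LocalBaer

variable {R : Type u} [Ring R] {Q : Type v} [AddCommGroup Q] [Module R Q]

/-- The local Baer condition: for every partial linear map `φ : dom → Q` with
`dom ≤ Y` a submodule of a test module `Y`, and every `y : Y`, the ideal map
`s ↦ φ (s • y)` (defined on `{s | s • y ∈ dom}`) extends to `R`. -/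
def LB (R : Type u) (Q : Type v) [Ring R] [AddCommGroup Q] [Module R Q] : Prop :=
  ∀ (Y : Type v) [AddCommGroup Y] [Module R Y] (dom : Submodule R Y)
    (φ : dom →ₗ[R] Q) (y : Y),
    ∃ g' : R →ₗ[R] Q, ∀ (s : R) (hs : s • y ∈ dom), g' s = φ ⟨s • y, hs⟩

open Module Module.Baer

variable {M N : Type v} [AddCommGroup M] [AddCommGroup N] [Module R M] [Module R N]
variable (i : M →ₗ[R] N) (f : M →ₗ[R] Q) [Fact <| Function.Injective i]

/-- The analogue of `Module.Baer.ExtensionOfMaxAdjoin.extendIdealTo`, using only the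
local Baer condition. -/
def extendIdealTo2 (h : LB R Q) (y : N) : R →ₗ[R] Q :=
  (h N (extensionOfMax i f).domain (extensionOfMax i f).toLinearPMap.toFun y).choose

theorem extendIdealTo2_is_extension (h : LB R Q) (y : N) :
    ∀ (x : R) (mem : x ∈ ExtensionOfMaxAdjoin.ideal i f y),
      extendIdealTo2 i f h y x = ExtensionOfMaxAdjoin.idealTo i f y ⟨x, mem⟩ :=
  fun x mem =>
    (h N (extensionOfMax i f).domain (extensionOfMax i f).toLinearPMap.toFun y).choose_spec x mem

theorem extendIdealTo2_wd' (h : LB R Q) {y : N} (r : R)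
    (eq1 : r • y = 0) : extendIdealTo2 i f h y r = 0 := by
  have : r ∈ ExtensionOfMaxAdjoin.ideal i f y := by
    change (r • y) ∈ (extensionOfMax i f).toLinearPMap.domain
    rw [eq1]
    apply Submodule.zero_mem _
  rw [extendIdealTo2_is_extension i f h y r this]
  dsimp [ExtensionOfMaxAdjoin.idealTo]
  simp only [LinearMap.coe_mk, eq1, Subtype.coe_mk, ← ZeroMemClass.zero_def,
    (extensionOfMax i f).toLinearPMap.map_zero]

theorem extendIdealTo2_wd (h : LB R Q) {y : N} (r r' : R)
    (eq1 : r • y = r' • y) : extendIdealTo2 i f h y r = extendIdealTo2 i f h y r' := by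
  rw [← sub_eq_zero, ← map_sub]
  convert extendIdealTo2_wd' i f h (r - r') _
  rw [sub_smul, sub_eq_zero, eq1]

theorem extendIdealTo2_eq (h : LB R Q) {y : N} (r : R)
    (hr : r • y ∈ (extensionOfMax i f).domain) : extendIdealTo2 i f h y r =
    (extensionOfMax i f).toLinearPMap ⟨r • y, hr⟩ := by
  simp only [extendIdealTo2_is_extension i f h _ _ hr,
    ExtensionOfMaxAdjoin.idealTo, LinearMap.coe_mk, Subtype.coe_mk, AddHom.coe_mk]

/-- The analogue of `Module.Baer.ExtensionOfMaxAdjoin.extensionToFun`. -/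
def extensionToFun2 (h : LB R Q) {y : N} :
    supExtensionOfMaxSingleton i f y → Q := fun x =>
  (extensionOfMax i f).toLinearPMap (ExtensionOfMaxAdjoin.fst i x) +
    extendIdealTo2 i f h y (ExtensionOfMaxAdjoin.snd i x)

theorem extensionToFun2_wd (h : LB R Q) {y : N}
    (x : supExtensionOfMaxSingleton i f y) (a : (extensionOfMax i f).domain)
    (r : R) (eq1 : ↑x = ↑a + r • y) :
    extensionToFun2 i f h x =
      (extensionOfMax i f).toLinearPMap a + extendIdealTo2 i f h y r := by
  cases' a with a ha
  have eq2 :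
    (ExtensionOfMaxAdjoin.fst i x - a : N) = (r - ExtensionOfMaxAdjoin.snd i x) • y := by
    change x = a + r • y at eq1
    rwa [ExtensionOfMaxAdjoin.eqn, ← sub_eq_zero, ← sub_sub_sub_eq, sub_eq_zero, ← sub_smul]
      at eq1
  have eq3 :=
    extendIdealTo2_eq i f h (r - ExtensionOfMaxAdjoin.snd i x)
      (by rw [← eq2]; exact Submodule.sub_mem _ (ExtensionOfMaxAdjoin.fst i x).2 ha)
  simp only [map_sub, sub_smul, sub_eq_iff_eq_add] at eq3
  unfold extensionToFun2
  rw [eq3, ← add_assoc, ← (extensionOfMax i f).toLinearPMap.map_add, AddMemClass.mk_add_mk]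
  congr
  ext
  dsimp
  rw [Subtype.coe_mk, add_sub, ← eq1]
  exact eq_sub_of_add_eq (ExtensionOfMaxAdjoin.eqn i x).symm

/-- The analogue of `Module.Baer.extensionOfMaxAdjoin`. -/
def extensionOfMaxAdjoin2 (h : LB R Q) (y : N) : ExtensionOf i f where
  domain := supExtensionOfMaxSingleton i f y
  le := le_trans (extensionOfMax i f).le le_sup_left
  toFun :=
    { toFun := extensionToFun2 i f h
      map_add' := fun a b => by
        have eq1 :
          ↑a + ↑b =
            ↑(ExtensionOfMaxAdjoin.fst i a + ExtensionOfMaxAdjoin.fst i b) +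
              (ExtensionOfMaxAdjoin.snd i a + ExtensionOfMaxAdjoin.snd i b) • y := by
          rw [ExtensionOfMaxAdjoin.eqn, ExtensionOfMaxAdjoin.eqn, add_smul, Submodule.coe_add]
          ac_rfl
        rw [extensionToFun2_wd (y := y) i f h (a + b) _ _ eq1, LinearPMap.map_add, map_add]
        unfold extensionToFun2
        abel
      map_smul' := fun r a => by
        dsimp
        have eq1 :
          r • (a : N) =
            ↑(r • ExtensionOfMaxAdjoin.fst i a) + (r • ExtensionOfMaxAdjoin.snd i a) • y := by
          rw [ExtensionOfMaxAdjoin.eqn, smul_add, smul_eq_mul, mul_smul]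
          rfl
        rw [extensionToFun2_wd i f h (r • a :) _ _ eq1, LinearMap.map_smul,
          LinearPMap.map_smul, ← smul_add]
        congr }
  is_extension m := by
    dsimp
    rw [(extensionOfMax i f).is_extension,
      extensionToFun2_wd i f h _ ⟨i m, _⟩ 0 _, map_zero, add_zero]
    simp

theorem extensionOfMax_le2 (h : LB R Q) {y : N} :
    extensionOfMax i f ≤ extensionOfMaxAdjoin2 i f h y :=
  ⟨le_sup_left, fun x x' EQ => by
    symm
    change extensionToFun2 i f h _ = _
    rw [extensionToFun2_wd i f h x' x 0 (by simp [EQ]), map_zero, add_zero]⟩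

theorem extensionOfMax_to_submodule_eq_top2 (h : LB R Q) :
    (extensionOfMax i f).domain = ⊤ := by
  refine Submodule.eq_top_iff'.mpr fun y => ?_
  rw [← extensionOfMax_is_max i f _ (extensionOfMax_le2 i f h), extensionOfMaxAdjoin2,
    Submodule.mem_sup]
  exact ⟨0, Submodule.zero_mem _, y, Submodule.mem_span_singleton_self _, zero_add _⟩

/-- Baer's criterion, using only the local Baer condition. -/
protected theorem injective (h : LB R Q) : Module.Injective R Q where
  out X Y _ _ _ _ i hi f := by
    haveI : Fact (Function.Injective i) := ⟨hi⟩
    refine ⟨{ toFun := fun y => (extensionOfMax i f).toLinearPMap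
                ⟨y, (extensionOfMax_to_submodule_eq_top2 i f h).symm ▸ Submodule.mem_top⟩
              map_add' := fun x y => by rw [← LinearPMap.map_add]; congr
              map_smul' := fun r x => by rw [← LinearPMap.map_smul]; dsimp },
      fun x => ((extensionOfMax i f).is_extension x).symm⟩

end LocalBaer

end LocalBaerSection

/-! ## Structure of `gammaIJ` -/

noncomputable section GammaSection

variable {R S E : Type*} [CommRing R] [Ring S] [Algebra R S]
  [AddCommGroup E] [Module S E] {I J : Ideal R}

lemma annRS_mono {N N' : Submodule S E} (h : N ≤ N') : annRS R N' ≤ annRS R N :=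
  fun r hr x hx => hr x (h hx)

lemma gamma_sup_aux {N₁ N₂ : Submodule S E}
    (h₁ : ∃ n, 1 ≤ n ∧ I ^ n ≤ annRS R N₁ ⊔ J) (h₂ : ∃ n, 1 ≤ n ∧ I ^ n ≤ annRS R N₂ ⊔ J) :
    ∃ n, 1 ≤ n ∧ I ^ n ≤ annRS R (N₁ ⊔ N₂) ⊔ J := by
  obtain ⟨n₁, hn₁, hle₁⟩ := h₁
  obtain ⟨n₂, hn₂, hle₂⟩ := h₂
  refine ⟨n₁ + n₂, le_trans hn₁ (Nat.le_add_right _ _), ?_⟩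
  rw [pow_add]
  refine Ideal.mul_le.mpr fun r hr s hs => ?_
  obtain ⟨a₁, ha₁, j₁, hj₁, rfl⟩ := Submodule.mem_sup.mp (hle₁ hr)
  obtain ⟨a₂, ha₂, j₂, hj₂, rfl⟩ := Submodule.mem_sup.mp (hle₂ hs)
  refine Submodule.mem_sup.mpr ⟨a₁ * a₂, ?_, a₁ * j₂ + j₁ * a₂ + j₁ * j₂, ?_, by ring⟩
  · intro x hx
    obtain ⟨x₁, hx₁, x₂, hx₂, rfl⟩ := Submodule.mem_sup.mp hx
    rw [smul_add]
    have e₁ : algebraMap R S (a₁ * a₂) • x₁ = 0 := by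
      rw [mul_comm, map_mul, mul_smul, ha₁ x₁ hx₁, smul_zero]
    have e₂ : algebraMap R S (a₁ * a₂) • x₂ = 0 := by
      rw [map_mul, mul_smul, ha₂ x₂ hx₂, smul_zero]
    rw [e₁, e₂, add_zero]
  · exact J.add_mem (J.add_mem (J.mul_mem_left a₁ hj₂) (J.mul_mem_right a₂ hj₁))
      (J.mul_mem_left j₁ hj₂)

lemma gammaSet_nonempty :
    Set.Nonempty {N : Submodule S E | N.FG ∧ ∃ n, 1 ≤ n ∧ I ^ n ≤ annRS R N ⊔ J} := by
  refine ⟨⊥, Submodule.fg_bot, 1, le_refl 1, ?_⟩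
  rw [pow_one]
  intro r _
  refine Submodule.mem_sup_left ?_
  intro x hx
  rw [Submodule.mem_bot] at hx
  rw [hx, smul_zero]

lemma gammaSet_directed :
    DirectedOn (· ≤ ·) {N : Submodule S E | N.FG ∧ ∃ n, 1 ≤ n ∧ I ^ n ≤ annRS R N ⊔ J} :=
  fun N₁ h₁ N₂ h₂ =>
    ⟨N₁ ⊔ N₂, ⟨Submodule.FG.sup h₁.1 h₂.1, gamma_sup_aux h₁.2 h₂.2⟩, le_sup_left, le_sup_right⟩

lemma mem_gammaIJ_iff {x : E} :
    x ∈ gammaIJ R S I J E ↔ ∃ n, 1 ≤ n ∧ I ^ n ≤ annRS R (Submodule.span S {x}) ⊔ J := by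
  constructor
  · intro hx
    obtain ⟨N, hN, hxN⟩ :=
      (Submodule.mem_sSup_of_directed gammaSet_nonempty gammaSet_directed).mp hx
    obtain ⟨-, n, hn, hle⟩ := hN
    refine ⟨n, hn, le_trans hle (sup_le_sup_right (annRS_mono ?_) J)⟩
    exact (Submodule.span_singleton_le_iff_mem x N).mpr hxN
  · rintro ⟨n, hn, hle⟩
    exact le_sSup
      (show Submodule.span S {x} ∈
          {N : Submodule S E | N.FG ∧ ∃ n, 1 ≤ n ∧ I ^ n ≤ annRS R N ⊔ J} from
        ⟨Submodule.fg_span_singleton x, n, hn, hle⟩)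
      (Submodule.mem_span_singleton_self x)

lemma fg_le_gammaIJ {N : Submodule S E} (hfg : N.FG) (hle : N ≤ gammaIJ R S I J E) :
    ∃ n, 1 ≤ n ∧ I ^ n ≤ annRS R N ⊔ J := by
  obtain ⟨M, hM, hNM⟩ :=
    (CompleteLattice.isCompactElement_iff_le_of_directed_sSup_le _ N).mp
      ((Submodule.fg_iff_compact N).mp hfg) _ gammaSet_nonempty gammaSet_directed hle
  obtain ⟨-, n, hn, hle'⟩ := hM
  exact ⟨n, hn, le_trans hle' (sup_le_sup_right (annRS_mono hNM) J)⟩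

lemma sup_pow_le (A J : Ideal R) : ∀ T, 1 ≤ T → (A ⊔ J) ^ T ≤ A ^ T ⊔ J := by
  intro T hT
  induction T with
  | zero => omega
  | succ T ih =>
    rcases Nat.eq_or_lt_of_le hT with h1 | h1
    · rw [← h1, pow_one, pow_one]
    · have hT' : 1 ≤ T := by omega
      rw [pow_succ, pow_succ]
      refine le_trans (Ideal.mul_mono (ih hT') le_rfl) (Ideal.mul_le.mpr fun r hr s hs => ?_)
      obtain ⟨a, ha, j, hj, rfl⟩ := Submodule.mem_sup.mp hr
      obtain ⟨a', ha', j', hj', rfl⟩ := Submodule.mem_sup.mp hs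
      refine Submodule.mem_sup.mpr ⟨a * a', Ideal.mul_mem_mul ha ha',
        a * j' + j * (a' + j'), ?_, by ring⟩
      exact J.add_mem (J.mul_mem_left a hj') (J.mul_mem_right _ hj)

end GammaSection

/-! ## The Fitting-lemma step -/

noncomputable section FittingSection

variable {R S E : Type*} [CommRing R] [Ring S] [Algebra R S]
  [AddCommGroup E] [Module S E]

/-- Multiplication by a central element of `S` is an `S`-linear endomorphism. -/
def centralSmul (α : S) (hα : ∀ s : S, α * s = s * α) : E →ₗ[S] E where
  toFun m := α • m
  map_add' := smul_add α
  map_smul' s m := by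
    simp only [RingHom.id_apply, ← mul_smul, hα s]

lemma centralSmul_pow_apply (α : S) (hα : ∀ s : S, α * s = s * α) (t : ℕ) (m : E) :
    ((centralSmul (E := E) α hα) ^ t) m = α ^ t • m := by
  induction t with
  | zero => simp
  | succ t ih =>
    rw [pow_succ', Module.End.mul_apply, ih]
    show α • (α ^ t • m) = α ^ (t + 1) • m
    rw [← mul_smul, ← pow_succ']

variable [IsNoetherianRing S]

lemma fitting_step (x : E) (α : S) (hα : ∀ s : S, α * s = s * α) :
    ∃ t, 1 ≤ t ∧ ∀ m ∈ Submodule.span S {x}, α ^ (t + 1) • m = 0 → α ^ t • m = 0 := by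
  set N := Submodule.span S {x}
  haveI : IsNoetherian S N :=
    isNoetherian_of_fg_of_noetherian N (Submodule.fg_span_singleton x)
  set C : ℕ → Submodule S N :=
    fun t => Submodule.comap N.subtype (LinearMap.ker ((centralSmul (E := E) α hα) ^ t))
    with hCdef
  have key : Monotone C :=
    monotone_nat_of_le_succ fun t z hz => by
      simp only [hCdef, Submodule.mem_comap, LinearMap.mem_ker] at hz ⊢
      rw [pow_succ', Module.End.mul_apply, hz, map_zero]
  obtain ⟨t₀, ht₀⟩ := monotone_stabilizes_iff_noetherian.mpr ‹IsNoetherian S N› ⟨C, key⟩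
  simp only [OrderHom.coe_mk] at ht₀
  refine ⟨t₀ + 1, by omega, fun m hm h0 => ?_⟩
  have e1 := ht₀ (t₀ + 1) (by omega)
  have e2 := ht₀ (t₀ + 2) (by omega)
  have hmem : (⟨m, hm⟩ : N) ∈ C (t₀ + 2) := by
    simp only [hCdef, Submodule.mem_comap, LinearMap.mem_ker, Submodule.coe_subtype]
    rw [centralSmul_pow_apply]
    exact h0
  rw [← e2, e1] at hmem
  simp only [hCdef, Submodule.mem_comap, LinearMap.mem_ker, Submodule.coe_subtype] at hmem
  rwa [centralSmul_pow_apply] at hmem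

end FittingSection

/-! ## Main argument -/

noncomputable section MainSection

universe u₁ u₂ u₃

variable {R : Type u₁} {S : Type u₂} {E : Type u₃} [CommRing R] [Ring S] [Algebra R S]
  [AddCommGroup E] [Module S E] {I J : Ideal R}

variable [IsNoetherianRing S]

/-- One correction step: given `x` whose `D`-translates are killed by a central element
`algebraMap R S a`, one can modify `x` to `y` with the same `D`-translates such that a
power of `algebraMap R S a` kills `y` itself. -/
lemma lemmaA (hE : Module.Injective S E) (D : Submodule S S) (x : E) (a : R)
    (ha : ∀ s ∈ D, algebraMap R S a • (s • x) = 0) :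
    ∃ (y : E) (t : ℕ), 1 ≤ t ∧ (∀ s ∈ D, s • y = s • x) ∧ (algebraMap R S a) ^ t • y = 0 := by
  set α := algebraMap R S a with hαdef
  have hα : ∀ s : S, α * s = s * α := fun s => Algebra.commutes a s
  obtain ⟨t, ht1, hFit⟩ := fitting_step (E := E) x α hα
  have hαt : ∀ s : S, α ^ t * s = s * α ^ t := fun s => Commute.pow_left (hα s) t
  -- the two maps from `D × S`
  set π : (D × S) →ₗ[S] S :=
    D.subtype.comp (LinearMap.fst S D S) +
      (LinearMap.toSpanSingleton S S (α ^ t)).comp (LinearMap.snd S D S) with hπdef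
  set p : (D × S) →ₗ[S] E := (LinearMap.toSpanSingleton S E x).comp π with hpdef
  set q : (D × S) →ₗ[S] E :=
    (LinearMap.toSpanSingleton S E x).comp (D.subtype.comp (LinearMap.fst S D S)) with hqdef
  have hp_apply : ∀ v : D × S, p v = ((v.1 : S) + v.2 * α ^ t) • x := fun v => rfl
  have hq_apply : ∀ v : D × S, q v = (v.1 : S) • x := fun v => rfl
  have hker : LinearMap.ker p ≤ LinearMap.ker q := by
    rintro ⟨d, s⟩ hv
    rw [LinearMap.mem_ker, hp_apply] at hv
    rw [LinearMap.mem_ker, hq_apply]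
    dsimp only at hv ⊢
    have h1 : (d : S) • x = -((α ^ t * s) • x) := by
      rw [hαt, eq_neg_iff_add_eq_zero, ← add_smul]
      exact hv
    have h2 : α ^ (t + 1) • (s • x) = 0 := by
      have he : α ^ (t + 1) • (s • x) = α • ((α ^ t * s) • x) := by
        rw [← mul_smul, ← mul_smul, pow_succ', mul_assoc]
      rw [he, ← neg_neg ((α ^ t * s) • x), ← h1, smul_neg, ha d d.2, neg_zero]
    have h3 : α ^ t • (s • x) = 0 :=
      hFit (s • x) (Submodule.smul_mem _ s (Submodule.mem_span_singleton_self x)) h2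
    have h4 : (α ^ t * s) • x = 0 := by rw [mul_smul]; exact h3
    rw [h1, h4, neg_zero]
  -- the map `range p → E`
  set θ : LinearMap.range p →ₗ[S] E :=
    (Submodule.liftQ (LinearMap.ker p) q hker).comp
      (p.quotKerEquivRange).symm.toLinearMap with hθdef
  have hθ_apply : ∀ v : D × S, θ ⟨p v, LinearMap.mem_range_self p v⟩ = q v := by
    intro v
    have h1 : (p.quotKerEquivRange).symm ⟨p v, LinearMap.mem_range_self p v⟩ =
        Submodule.Quotient.mk v := by
      rw [LinearEquiv.symm_apply_eq]
      exact Subtype.ext (p.quotKerEquivRange_apply_mk v).symm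
    rw [hθdef, LinearMap.comp_apply, LinearEquiv.coe_toLinearMap, h1, Submodule.liftQ_apply]
  have hle : LinearMap.range p ≤ LinearMap.range (LinearMap.toSpanSingleton S E x) := by
    rintro _ ⟨v, rfl⟩
    exact ⟨π v, rfl⟩
  obtain ⟨H, hH⟩ := hE.out (Submodule.inclusion hle) (Submodule.inclusion_injective hle) θ
  have hx_mem : x ∈ LinearMap.range (LinearMap.toSpanSingleton S E x) :=
    ⟨1, one_smul S x⟩
  refine ⟨H ⟨x, hx_mem⟩, t, ht1, ?_, ?_⟩
  · intro s hs
    have h1 : s • H ⟨x, hx_mem⟩ = H ⟨s • x, Submodule.smul_mem _ s hx_mem⟩ := by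
      rw [← map_smul]; rfl
    have h2 : (⟨s • x, Submodule.smul_mem _ s hx_mem⟩ :
        LinearMap.range (LinearMap.toSpanSingleton S E x)) =
        Submodule.inclusion hle ⟨p (⟨s, hs⟩, 0), LinearMap.mem_range_self p _⟩ := by
      apply Subtype.ext
      show s • x = p (⟨s, hs⟩, 0)
      rw [hp_apply]
      simp
    rw [h1, h2, hH, hθ_apply, hq_apply]
  · have h1 : α ^ t • H ⟨x, hx_mem⟩ = H ⟨α ^ t • x, Submodule.smul_mem _ _ hx_mem⟩ := by
      rw [← map_smul]; rfl
    have h2 : (⟨α ^ t • x, Submodule.smul_mem _ _ hx_mem⟩ :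
        LinearMap.range (LinearMap.toSpanSingleton S E x)) =
        Submodule.inclusion hle ⟨p (0, 1), LinearMap.mem_range_self p _⟩ := by
      apply Subtype.ext
      show α ^ t • x = p (0, 1)
      rw [hp_apply]
      simp
    rw [h1, h2, hH, hθ_apply, hq_apply]
    simp

/-- Iterating `lemmaA` over a list of annihilating elements. -/
lemma lemmaA_list (hE : Module.Injective S E) (lst : List R) :
    ∀ (D : Submodule S S) (x : E),
      (∀ a ∈ lst, ∀ s ∈ D, algebraMap R S a • (s • x) = 0) →
      ∃ y : E, (∀ s ∈ D, s • y = s • x) ∧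
        ∀ a ∈ lst, ∃ t, 1 ≤ t ∧ (algebraMap R S a) ^ t • y = 0 := by
  induction lst with
  | nil => exact fun D x _ => ⟨x, fun s _ => rfl, by simp⟩
  | cons a lst ih =>
    intro D x hyp
    obtain ⟨y₁, t, ht1, hy₁, hαt⟩ := lemmaA hE D x a (hyp a List.mem_cons_self)
    set α := algebraMap R S a
    set D' : Submodule S S := D ⊔ Submodule.span S {α ^ t} with hD'def
    have hD'y₁ : ∀ a' ∈ lst, ∀ s ∈ D', algebraMap R S a' • (s • y₁) = 0 := by
      intro a' ha' s hs
      obtain ⟨l, hl, u, hu, rfl⟩ := Submodule.mem_sup.mp hs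
      obtain ⟨c, rfl⟩ := Submodule.mem_span_singleton.mp hu
      have h1 : (l + c • α ^ t) • y₁ = l • x := by
        rw [add_smul, hy₁ l hl, smul_eq_mul, mul_smul, hαt, smul_zero, add_zero]
      rw [h1]
      exact hyp a' (List.mem_cons_of_mem a ha') l hl
    obtain ⟨y, hy, hpow⟩ := ih D' y₁ hD'y₁
    refine ⟨y, ?_, ?_⟩
    · intro s hs
      rw [hy s (Submodule.mem_sup_left hs), hy₁ s hs]
    · intro a' ha'
      rcases List.mem_cons.mp ha' with rfl | ha'
      · refine ⟨t, ht1, ?_⟩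
        have hmem : α ^ t ∈ D' := Submodule.mem_sup_right (Submodule.mem_span_singleton_self _)
        rw [hy _ hmem, hαt]
      · exact hpow a' ha'

variable [IsNoetherianRing R]

/-- The key correction lemma: if all `D`-translates of `x` lie in `Γ_{I,J}(E)`, then there is
`y ∈ Γ_{I,J}(E)` with the same `D`-translates. -/
lemma key_gamma (hE : Module.Injective S E)
    (D : Submodule S S) (x : E) (hDx : ∀ s ∈ D, s • x ∈ gammaIJ R S I J E) :
    ∃ y : E, y ∈ gammaIJ R S I J E ∧ ∀ s ∈ D, s • y = s • x := by
  classical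
  set N₀ : Submodule S E := Submodule.map (LinearMap.toSpanSingleton S E x) D with hN₀
  have hN₀fg : N₀.FG := Submodule.FG.map _ (IsNoetherian.noetherian D)
  have htss : ∀ s : S, LinearMap.toSpanSingleton S E x s = s • x := fun s => rfl
  have hN₀le : N₀ ≤ gammaIJ R S I J E := by
    rintro _ ⟨s, hs, rfl⟩
    rw [htss]
    exact hDx s hs
  obtain ⟨n, hn, hIn⟩ := fg_le_gammaIJ hN₀fg hN₀le
  set A := annRS R N₀ with hA
  obtain ⟨fs, hfs⟩ := IsNoetherian.noetherian A
  have hyp : ∀ a ∈ fs.toList, ∀ s ∈ D, algebraMap R S a • (s • x) = 0 := by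
    intro a ha s hs
    have haA : a ∈ A := hfs ▸ Submodule.subset_span (Finset.mem_coe.mpr (Finset.mem_toList.mp ha))
    exact haA (s • x) (Submodule.mem_map.mpr ⟨s, hs, htss s⟩)
  obtain ⟨y, hy, hpow⟩ := lemmaA_list hE fs.toList D x hyp
  set B := annRS R (Submodule.span S {y}) with hB
  have hrad : A ≤ B.radical := by
    rw [← hfs, Submodule.span_le]
    intro a ha
    refine Ideal.mem_radical_iff.mpr ?_
    obtain ⟨t, ht1, h0⟩ := hpow a (Finset.mem_toList.mpr (Finset.mem_coe.mp ha))
    refine ⟨t, ?_⟩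
    show ∀ z ∈ Submodule.span S {y}, algebraMap R S (a ^ t) • z = 0
    intro z hz
    obtain ⟨c, rfl⟩ := Submodule.mem_span_singleton.mp hz
    have hcomm : algebraMap R S a ^ t * c = c * algebraMap R S a ^ t :=
      Commute.pow_left (Algebra.commutes a c) t
    rw [map_pow, ← mul_smul, hcomm, mul_smul, h0, smul_zero]
  obtain ⟨k, hk⟩ := Ideal.exists_pow_le_of_le_radical_of_fg hrad (IsNoetherian.noetherian A)
  refine ⟨y, mem_gammaIJ_iff.mpr ⟨n * max k 1, ?_, ?_⟩, hy⟩
  · have h := Nat.mul_le_mul hn (le_max_right k 1)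
    simpa using h
  · calc I ^ (n * max k 1) = (I ^ n) ^ max k 1 := pow_mul I n (max k 1)
      _ ≤ (A ⊔ J) ^ max k 1 := Ideal.pow_right_mono hIn _
      _ ≤ A ^ max k 1 ⊔ J := sup_pow_le A J _ (le_max_right k 1)
      _ ≤ A ^ k ⊔ J := sup_le_sup_right (Ideal.pow_le_pow_right (le_max_left k 1)) J
      _ ≤ B ⊔ J := sup_le_sup_right hk J

/-- `Γ_{I,J}(E)` satisfies the local Baer condition. -/
lemma lb_gamma (hE : Module.Injective S E) (I J : Ideal R) :
    LocalBaer.LB S ↥(gammaIJ R S I J E) := by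
  intro Y _ _ dom φ y
  have hle : dom ⊓ Submodule.span S {y} ≤ Submodule.span S {y} := inf_le_right
  set g : ↥(dom ⊓ Submodule.span S {y}) →ₗ[S] E :=
    (gammaIJ R S I J E).subtype ∘ₗ φ ∘ₗ Submodule.inclusion inf_le_left with hg
  obtain ⟨H, hH⟩ := hE.out (Submodule.inclusion hle) (Submodule.inclusion_injective hle) g
  set x := H ⟨y, Submodule.mem_span_singleton_self y⟩ with hx
  have hxact : ∀ (s : S) (hs : s • y ∈ dom), s • x = ↑(φ ⟨s • y, hs⟩) := by
    intro s hs
    have hmem : s • y ∈ Submodule.span S {y} :=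
      Submodule.smul_mem _ s (Submodule.mem_span_singleton_self y)
    have h1 : s • x = H ⟨s • y, hmem⟩ := by
      rw [hx, ← map_smul]
      congr 1
    have h2 : (⟨s • y, hmem⟩ : ↥(Submodule.span S {y})) =
        Submodule.inclusion hle ⟨s • y, ⟨hs, hmem⟩⟩ := Subtype.ext rfl
    have harg : Submodule.inclusion (inf_le_left : dom ⊓ Submodule.span S {y} ≤ dom)
        ⟨s • y, ⟨hs, hmem⟩⟩ = ⟨s • y, hs⟩ := Subtype.ext rfl
    rw [h1, h2, hH, hg]
    simp only [LinearMap.comp_apply, Submodule.coe_subtype, harg]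
  set D : Submodule S S := Submodule.comap (LinearMap.toSpanSingleton S Y y) dom with hD
  have hmemD : ∀ s : S, s ∈ D ↔ s • y ∈ dom := fun s => Iff.rfl
  have hDx : ∀ s ∈ D, s • x ∈ gammaIJ R S I J E := by
    intro s hs
    rw [hxact s ((hmemD s).mp hs)]
    exact (φ ⟨s • y, (hmemD s).mp hs⟩).2
  obtain ⟨y', hy'Γ, hy'⟩ := key_gamma hE D x hDx
  refine ⟨LinearMap.toSpanSingleton S ↥(gammaIJ R S I J E) ⟨y', hy'Γ⟩, ?_⟩
  intro s hs
  apply Subtype.ext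
  show s • y' = ↑(φ ⟨s • y, hs⟩)
  rw [hy' s ((hmemD s).mpr hs), hxact s hs]

end MainSection

/-- If `E` is an injective `S`-module, `R` is commutative noetherian and `S` is a left
noetherian `R`-algebra, then `Γ_{I,J}(E)` is again an injective `S`-module. -/
theorem gammaIJ_injective_of_injective
    (R S E : Type*) [CommRing R] [IsNoetherianRing R] [Ring S] [IsNoetherianRing S]
    [Algebra R S] [AddCommGroup E] [Module S E] (I J : Ideal R)
    (hE : Module.Injective S E) :
    Module.Injective S ↥(gammaIJ R S I J E) :=
  LocalBaer.injective (lb_gamma hE I J)
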